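/- Under still-water conditions with equal sediment and porosity traces, the reconstructed interface heights coincide: h^{+,*} = h^{−,*}, and hence the Lax–Friedrichs flux jump penalty term α(Ũ^{+,*} − Ũ^{−,*}) vanishes. -/
import Mathlib


/-- Under still-water conditions the reconstructed interface heights coincide,
`h^{+,*} = h^{−,*}`, hence the Lax–Friedrichs jump penalty
`α(Ũ^{+,*} − Ũ^{−,*})` vanishes. -/
theorem reconstructed_heights_eq
    (α : ℝ) (hp hm zp zm φp φm : ℝ)
    (hφp : 0 < φp) (hφm : 0 < φm) (hhp : 0 ≤ hp) (hhm : 0 ≤ hm)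
    (hsw : hp / φp + zp = hm / φm + zm) :
    let φmin := min φp φm
    let hps := max 0 (hp / φp + zp - max zp zm) * φmin
    let hms := max 0 (hm / φm + zm - max zp zm) * φmin
    hps = hms ∧ α • (((hps, (0 : ℝ)) : ℝ × ℝ) - (hms, 0)) = 0 := by
  intro φmin hps hms
  have h1 : hps = hms := by simp only [hps, hms, hsw]
  exact ⟨h1, by simp [h1]⟩
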